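/- Let P, F ⊆ ℝⁿ be convex polyhedra, let (V_P, C_P, R_P) be a generator for P and (V_F, C_F, R_F) be a generator for F. Then the triple (V_P ⊕ V_F, C_P ∪ V_P, R_P ∪ V_F ∪ C_F ∪ R_F), where ⊕ denotes Minkowski sum, is a generator for the positive post-flow postf⁺(P,F); that is, the set {x + δ•y | x ∈ P, y ∈ F, δ > 0} equals gen(V_P ⊕ V_F, C_P ∪ V_P, R_P ∪ V_F ∪ C_F ∪ R_F). -/

import Mathlib

open Finset Pointwise

/-- `gen V C R` is the set of points generated by proper vertices `V`,
closure points `C` and rays `R`. -/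
noncomputable def gen {n : ℕ} (V C R : Finset (Fin n → ℝ)) : Set (Fin n → ℝ) :=
  {x | ∃ α β γ : (Fin n → ℝ) → ℝ,
    (∀ v ∈ V, 0 ≤ α v) ∧ (∀ c ∈ C, 0 ≤ β c) ∧ (∀ r ∈ R, 0 ≤ γ r) ∧
    ((∑ v ∈ V, α v) + (∑ c ∈ C, β c) = 1) ∧
    (∃ v ∈ V, 0 < α v) ∧
    x = (∑ v ∈ V, α v • v) + (∑ c ∈ C, β c • c) + (∑ r ∈ R, γ r • r)}

/-- The positive post-flow of `P` with respect to `F`. -/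
def posPostf {n : ℕ} (P F : Set (Fin n → ℝ)) : Set (Fin n → ℝ) :=
  {z | ∃ x ∈ P, ∃ y ∈ F, ∃ δ : ℝ, 0 < δ ∧ z = x + δ • y}

section helpers
variable {n : ℕ} {M : Type*} [AddCommMonoid M]

lemma sum_ite_subset' {s t : Finset (Fin n → ℝ)} (h : t ⊆ s) (f : (Fin n → ℝ) → M) :
    ∑ p ∈ s, (if p ∈ t then f p else 0) = ∑ p ∈ t, f p := by
  classical
  rw [Finset.sum_ite_mem, Finset.inter_eq_right.mpr h]

lemma split_union2 (A B : Finset (Fin n → ℝ)) (f : (Fin n → ℝ) → M) :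
    ∑ p ∈ A ∪ B, f p = ∑ p ∈ A, f p + ∑ p ∈ B, (if p ∈ A then 0 else f p) := by
  classical
  rw [← Finset.union_sdiff_self_eq_union, Finset.sum_union Finset.disjoint_sdiff]
  congr 1
  rw [show B \ A = B.filter (fun p => ¬ p ∈ A) from Finset.sdiff_eq_filter B A,
    Finset.sum_filter]
  exact Finset.sum_congr rfl fun p _ => by by_cases h : p ∈ A <;> simp [h]

lemma sum_minkowski (A B : Finset (Fin n → ℝ)) (f : (Fin n → ℝ) → (Fin n → ℝ) → (Fin n → ℝ) → M) :
    ∑ u ∈ A + B, ∑ v ∈ A, ∑ w ∈ B, (if v + w = u then f v w u else 0)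
      = ∑ v ∈ A, ∑ w ∈ B, f v w (v + w) := by
  classical
  rw [Finset.sum_comm]
  refine Finset.sum_congr rfl fun v hv => ?_
  rw [Finset.sum_comm]
  refine Finset.sum_congr rfl fun w hw => ?_
  rw [Finset.sum_ite_eq (A + B) (v + w) (f v w), if_pos (Finset.add_mem_add hv hw)]

end helpers

theorem positive_postflow_generator {n : ℕ} (P F : Set (Fin n → ℝ))
    (VP CP RP VF CF RF : Finset (Fin n → ℝ))
    (hP : P = gen VP CP RP) (hF : F = gen VF CF RF) :
    posPostf P F = gen (VP + VF) (CP ∪ VP) (RP ∪ VF ∪ CF ∪ RF) := by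
  classical
  apply Set.eq_of_subset_of_subset
  · rintro z ⟨x, hx, y, hy, δ, hδ, rfl⟩
    rw [hP] at hx; rw [hF] at hy
    obtain ⟨α, β, γ, hα0, hβ0, hγ0, hsx, ⟨v0, hv0, hv0p⟩, hxeq⟩ := hx
    obtain ⟨α', β', γ', hα'0, hβ'0, hγ'0, hsy, ⟨w0, hw0, hw0p⟩, hyeq⟩ := hy
    set a : ℝ := ∑ v ∈ VP, α v with ha_def
    set a' : ℝ := ∑ w ∈ VF, α' w with ha'_def
    have ha : 0 < a := Finset.sum_pos' hα0 ⟨v0, hv0, hv0p⟩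
    have ha' : 0 < a' := Finset.sum_pos' hα'0 ⟨w0, hw0, hw0p⟩
    set t : ℝ := min a (δ * a') with ht_def
    have ht : 0 < t := lt_min ha (mul_pos hδ ha')
    have hta : t ≤ a := min_le_left _ _
    have hta' : t ≤ δ * a' := min_le_right _ _
    set c : ℝ := t / (a * a') with hc_def
    have hc : 0 < c := div_pos ht (mul_pos ha ha')
    have hs1 : (0:ℝ) ≤ 1 - t / a := by
      rw [sub_nonneg, div_le_one ha]; exact hta
    have hs2 : (0:ℝ) ≤ δ - t / a' := by
      rw [sub_nonneg, div_le_iff₀ ha']; exact hta'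
    refine ⟨fun u => ∑ v ∈ VP, ∑ w ∈ VF, if v + w = u then c * (α v * α' w) else 0,
      fun p => (if p ∈ CP then β p else 0) + (if p ∈ VP then (1 - t / a) * α p else 0),
      fun p => (if p ∈ RP then γ p else 0) + (if p ∈ VF then (δ - t / a') * α' p else 0)
        + (if p ∈ CF then δ * β' p else 0) + (if p ∈ RF then δ * γ' p else 0),
      ?_, ?_, ?_, ?_, ?_, ?_⟩
    · intro u _
      refine Finset.sum_nonneg fun v hv => Finset.sum_nonneg fun w hw => ?_
      split_ifs
      · exact mul_nonneg hc.le (mul_nonneg (hα0 v hv) (hα'0 w hw))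
      · exact le_refl 0
    · intro p _
      have h1 : (0:ℝ) ≤ if p ∈ CP then β p else 0 := by
        split_ifs with h; exacts [hβ0 p h, le_refl 0]
      have h2 : (0:ℝ) ≤ if p ∈ VP then (1 - t / a) * α p else 0 := by
        split_ifs with h; exacts [mul_nonneg hs1 (hα0 p h), le_refl 0]
      linarith
    · intro p _
      have h1 : (0:ℝ) ≤ if p ∈ RP then γ p else 0 := by
        split_ifs with h; exacts [hγ0 p h, le_refl 0]
      have h2 : (0:ℝ) ≤ if p ∈ VF then (δ - t / a') * α' p else 0 := by
        split_ifs with h; exacts [mul_nonneg hs2 (hα'0 p h), le_refl 0]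
      have h3 : (0:ℝ) ≤ if p ∈ CF then δ * β' p else 0 := by
        split_ifs with h; exacts [mul_nonneg hδ.le (hβ'0 p h), le_refl 0]
      have h4 : (0:ℝ) ≤ if p ∈ RF then δ * γ' p else 0 := by
        split_ifs with h; exacts [mul_nonneg hδ.le (hγ'0 p h), le_refl 0]
      linarith
    · beta_reduce
      have hlt : (∑ u ∈ VP + VF, ∑ v ∈ VP, ∑ w ∈ VF,
          if v + w = u then c * (α v * α' w) else 0) = t := by
        rw [sum_minkowski VP VF (fun v w _ => c * (α v * α' w))]
        simp only [← Finset.mul_sum, ← Finset.sum_mul]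
        rw [hc_def]
        field_simp
        rw [ha_def, ha'_def]
      have hβs : (∑ p ∈ CP ∪ VP, ((if p ∈ CP then β p else 0)
            + (if p ∈ VP then (1 - t / a) * α p else 0)))
          = (∑ c ∈ CP, β c) + (1 - t / a) * a := by
        rw [Finset.sum_add_distrib, sum_ite_subset' Finset.subset_union_left β,
          sum_ite_subset' Finset.subset_union_right (fun p => (1 - t / a) * α p),
          ← Finset.mul_sum]
      rw [hlt, hβs]
      have : (1 - t / a) * a = a - t := by field_simp
      rw [this]
      linarith [hsx]
    · beta_reduce
      refine ⟨v0 + w0, Finset.add_mem_add hv0 hw0, ?_⟩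
      have hterm : (0:ℝ) < c * (α v0 * α' w0) := mul_pos hc (mul_pos hv0p hw0p)
      have h1 : c * (α v0 * α' w0)
          ≤ ∑ w ∈ VF, if v0 + w = v0 + w0 then c * (α v0 * α' w) else 0 := by
        have := Finset.single_le_sum (f := fun w => if v0 + w = v0 + w0 then c * (α v0 * α' w) else 0)
          (fun w hw => by beta_reduce; split_ifs; exacts [mul_nonneg hc.le (mul_nonneg (hα0 v0 hv0) (hα'0 w hw)), le_refl 0]) hw0
        simpa using this
      have h2 : (∑ w ∈ VF, if v0 + w = v0 + w0 then c * (α v0 * α' w) else 0)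
          ≤ ∑ v ∈ VP, ∑ w ∈ VF, if v + w = v0 + w0 then c * (α v * α' w) else 0 := by
        refine Finset.single_le_sum (f := fun v => ∑ w ∈ VF, if v + w = v0 + w0 then c * (α v * α' w) else 0)
          (fun v hv => by
            beta_reduce
            refine Finset.sum_nonneg fun w hw => ?_
            split_ifs
            exacts [mul_nonneg hc.le (mul_nonneg (hα0 v hv) (hα'0 w hw)), le_refl 0]) hv0
      linarith
    · beta_reduce
      -- the vector equation
      have hca' : c * a' = t / a := by rw [hc_def]; field_simp
      have hca : c * a = t / a' := by rw [hc_def]; field_simp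
      have hV : (∑ u ∈ VP + VF, (∑ v ∈ VP, ∑ w ∈ VF,
            if v + w = u then c * (α v * α' w) else 0) • u)
          = (t / a) • (∑ v ∈ VP, α v • v) + (t / a') • (∑ w ∈ VF, α' w • w) := by
        have hpush : ∀ u : Fin n → ℝ, (∑ v ∈ VP, ∑ w ∈ VF,
              if v + w = u then c * (α v * α' w) else 0) • u
            = ∑ v ∈ VP, ∑ w ∈ VF, (if v + w = u then (c * (α v * α' w)) • u else 0) := by
          intro u
          rw [Finset.sum_smul]
          refine Finset.sum_congr rfl fun v _ => ?_
          rw [Finset.sum_smul]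
          exact Finset.sum_congr rfl fun w _ => by split_ifs <;> simp
        rw [Finset.sum_congr rfl (fun u _ => hpush u),
          sum_minkowski VP VF (fun v w u => (c * (α v * α' w)) • u)]
        have hsplit : ∀ v ∈ VP, ∑ w ∈ VF, (c * (α v * α' w)) • (v + w)
            = (c * a' * α v) • v + (c * α v) • (∑ w ∈ VF, α' w • w) := by
          intro v _
          have e1 : ∀ w, (c * (α v * α' w)) • (v + w)
              = (c * (α v * α' w)) • v + ((c * α v) * α' w) • w := by
            intro w
            rw [smul_add]
            congr 2
            ring
          calc ∑ w ∈ VF, (c * (α v * α' w)) • (v + w)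
              = ∑ w ∈ VF, ((c * (α v * α' w)) • v + ((c * α v) * α' w) • w) :=
                Finset.sum_congr rfl fun w _ => e1 w
            _ = (∑ w ∈ VF, c * (α v * α' w)) • v
                  + (c * α v) • ∑ w ∈ VF, α' w • w := by
                rw [Finset.sum_add_distrib, Finset.sum_smul, Finset.smul_sum]
                congr 1
                exact Finset.sum_congr rfl fun w _ => (mul_smul _ _ _)
            _ = (c * a' * α v) • v + (c * α v) • ∑ w ∈ VF, α' w • w := by
                congr 2
                simp only [← Finset.mul_sum]
                rw [ha'_def]
                ring
        rw [Finset.sum_congr rfl hsplit, Finset.sum_add_distrib]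
        congr 1
        · rw [← hca', Finset.smul_sum]
          exact Finset.sum_congr rfl fun v _ => (mul_smul _ _ _)
        · rw [← hca, ← Finset.sum_smul, ← Finset.mul_sum, ← ha_def]
      have hC : ∑ p ∈ CP ∪ VP, ((if p ∈ CP then β p else 0)
            + (if p ∈ VP then (1 - t / a) * α p else 0)) • p
          = (∑ q ∈ CP, β q • q) + (1 - t / a) • (∑ v ∈ VP, α v • v) := by
        simp only [add_smul, ite_smul, zero_smul]
        rw [Finset.sum_add_distrib,
          sum_ite_subset' Finset.subset_union_left (fun p => β p • p),
          sum_ite_subset' Finset.subset_union_right (fun p => ((1 - t / a) * α p) • p),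
          Finset.smul_sum]
        simp only [mul_smul]
      have sub1 : RP ⊆ RP ∪ VF ∪ CF ∪ RF := fun p hp => by simp [Finset.mem_union, hp]
      have sub2 : VF ⊆ RP ∪ VF ∪ CF ∪ RF := fun p hp => by simp [Finset.mem_union, hp]
      have sub3 : CF ⊆ RP ∪ VF ∪ CF ∪ RF := fun p hp => by simp [Finset.mem_union, hp]
      have sub4 : RF ⊆ RP ∪ VF ∪ CF ∪ RF := fun p hp => by simp [Finset.mem_union, hp]
      have hR : ∑ p ∈ RP ∪ VF ∪ CF ∪ RF, ((if p ∈ RP then γ p else 0)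
            + (if p ∈ VF then (δ - t / a') * α' p else 0)
            + (if p ∈ CF then δ * β' p else 0) + (if p ∈ RF then δ * γ' p else 0)) • p
          = (∑ r ∈ RP, γ r • r) + (δ - t / a') • (∑ w ∈ VF, α' w • w)
            + δ • (∑ q ∈ CF, β' q • q) + δ • (∑ r ∈ RF, γ' r • r) := by
        simp only [add_smul, ite_smul, zero_smul]
        rw [Finset.sum_add_distrib, Finset.sum_add_distrib, Finset.sum_add_distrib,
          sum_ite_subset' sub1 (fun p => γ p • p),
          sum_ite_subset' sub2 (fun p => ((δ - t / a') * α' p) • p),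
          sum_ite_subset' sub3 (fun p => (δ * β' p) • p),
          sum_ite_subset' sub4 (fun p => (δ * γ' p) • p),
          Finset.smul_sum, Finset.smul_sum, Finset.smul_sum]
        simp only [mul_smul]
      rw [hxeq, hyeq, hV, hC, hR]
      module
  · rintro z ⟨lam, bet, gam, hl0, hb0, hg0, hsum1, ⟨u0, hu0, hu0p⟩, hzeq⟩
    have hdec : ∀ u ∈ VP + VF, ∃ v ∈ VP, ∃ w ∈ VF, v + w = u :=
      fun u hu => Finset.mem_add.mp hu
    choose! vd hvd wd hwd hvw using hdec
    set t : ℝ := ∑ u ∈ VP + VF, lam u with ht_def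
    have ht : 0 < t := Finset.sum_pos' hl0 ⟨u0, hu0, hu0p⟩
    set fV : (Fin n → ℝ) → ℝ :=
      fun v => ∑ u ∈ (VP + VF).filter (fun u => vd u = v), lam u with hfV_def
    set fW : (Fin n → ℝ) → ℝ :=
      fun w => ∑ u ∈ (VP + VF).filter (fun u => wd u = w), lam u with hfW_def
    set gV : (Fin n → ℝ) → ℝ := fun p => if p ∈ RP then 0 else gam p with hgV_def
    set gC : (Fin n → ℝ) → ℝ := fun p => if p ∈ RP ∪ VF then 0 else gam p with hgC_def
    set gR : (Fin n → ℝ) → ℝ := fun p => if p ∈ RP ∪ VF ∪ CF then 0 else gam p with hgR_def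
    have sub1 : RP ⊆ RP ∪ VF ∪ CF ∪ RF := fun p hp => by simp [Finset.mem_union, hp]
    have sub2 : VF ⊆ RP ∪ VF ∪ CF ∪ RF := fun p hp => by simp [Finset.mem_union, hp]
    have sub3 : CF ⊆ RP ∪ VF ∪ CF ∪ RF := fun p hp => by simp [Finset.mem_union, hp]
    have hgV0 : ∀ p ∈ VF, 0 ≤ gV p := by
      intro p hp
      simp only [hgV_def]
      split_ifs
      · exact le_refl 0
      · exact hg0 p (sub2 hp)
    have hgC0 : ∀ p ∈ CF, 0 ≤ gC p := by
      intro p hp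
      simp only [hgC_def]
      split_ifs
      · exact le_refl 0
      · exact hg0 p (sub3 hp)
    have hgR0 : ∀ p ∈ RF, 0 ≤ gR p := by
      intro p hp
      simp only [hgR_def]
      split_ifs
      · exact le_refl 0
      · exact hg0 p (by simp [Finset.mem_union, hp])
    set sV : ℝ := ∑ w ∈ VF, gV w with hsV_def
    set sC : ℝ := ∑ q ∈ CF, gC q with hsC_def
    have hsV : 0 ≤ sV := Finset.sum_nonneg hgV0
    have hsC : 0 ≤ sC := Finset.sum_nonneg hgC0
    set δ : ℝ := t + sV + sC with hδ_def
    have hδ : 0 < δ := by positivity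
    -- fiberwise sums
    have hfVt : ∑ v ∈ VP, fV v = t :=
      Finset.sum_fiberwise_of_maps_to hvd lam
    have hfWt : ∑ w ∈ VF, fW w = t :=
      Finset.sum_fiberwise_of_maps_to hwd lam
    have hfV0 : ∀ v, 0 ≤ fV v := by
      intro v
      refine Finset.sum_nonneg fun u hu => hl0 u (Finset.mem_filter.mp hu).1
    have hfW0 : ∀ w, 0 ≤ fW w := by
      intro w
      refine Finset.sum_nonneg fun u hu => hl0 u (Finset.mem_filter.mp hu).1
    have hfVu0 : lam u0 ≤ fV (vd u0) := by
      refine Finset.single_le_sum (fun u hu => hl0 u (Finset.mem_filter.mp hu).1) ?_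
      exact Finset.mem_filter.mpr ⟨hu0, rfl⟩
    have hfWu0 : lam u0 ≤ fW (wd u0) := by
      refine Finset.single_le_sum (fun u hu => hl0 u (Finset.mem_filter.mp hu).1) ?_
      exact Finset.mem_filter.mpr ⟨hu0, rfl⟩
    -- the witnesses
    set x : Fin n → ℝ :=
      (∑ v ∈ VP, (fV v + if v ∈ CP then 0 else bet v) • v)
        + (∑ q ∈ CP, bet q • q) + (∑ r ∈ RP, gam r • r) with hx_def
    set S : Fin n → ℝ :=
      (∑ w ∈ VF, (fW w + gV w) • w) + (∑ q ∈ CF, gC q • q) + (∑ r ∈ RF, gR r • r) with hS_def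
    refine ⟨x, ?_, δ⁻¹ • S, ?_, δ, hδ, ?_⟩
    · rw [hP]
      refine ⟨fun v => fV v + if v ∈ CP then 0 else bet v, bet, gam, ?_, ?_, ?_, ?_, ?_, rfl⟩
      · intro v hv
        beta_reduce
        have h2 : (0:ℝ) ≤ if v ∈ CP then 0 else bet v := by
          split_ifs with h
          · exact le_refl 0
          · exact hb0 v (Finset.mem_union_right _ hv)
        have := hfV0 v
        linarith
      · exact fun q hq => hb0 q (Finset.mem_union_left _ hq)
      · exact fun r hr => hg0 r (sub1 hr)
      · beta_reduce
        rw [Finset.sum_add_distrib, hfVt]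
        have hbsplit : ∑ p ∈ CP ∪ VP, bet p
            = ∑ q ∈ CP, bet q + ∑ v ∈ VP, (if v ∈ CP then 0 else bet v) :=
          split_union2 CP VP bet
        linarith [hbsplit, hsum1]
      · refine ⟨vd u0, hvd u0 hu0, ?_⟩
        beta_reduce
        have h2 : (0:ℝ) ≤ if vd u0 ∈ CP then 0 else bet (vd u0) := by
          split_ifs with h
          · exact le_refl 0
          · exact hb0 _ (Finset.mem_union_right _ (hvd u0 hu0))
        linarith [hfVu0, hu0p]
    · rw [hF]
      refine ⟨fun w => (fW w + gV w) / δ, fun q => gC q / δ, fun r => gR r / δ,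
        ?_, ?_, ?_, ?_, ?_, ?_⟩
      · exact fun w hw => div_nonneg (by linarith [hfW0 w, hgV0 w hw]) hδ.le
      · exact fun q hq => div_nonneg (hgC0 q hq) hδ.le
      · exact fun r hr => div_nonneg (hgR0 r hr) hδ.le
      · rw [← Finset.sum_div, ← Finset.sum_div, Finset.sum_add_distrib, hfWt]
        rw [← hsV_def, ← hsC_def, ← add_div, hδ_def]
        field_simp
      · refine ⟨wd u0, hwd u0 hu0, ?_⟩
        refine div_pos ?_ hδ
        have := hgV0 (wd u0) (hwd u0 hu0)
        linarith [hfWu0, hu0p]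
      · simp only [hS_def, smul_add, Finset.smul_sum, smul_smul, div_eq_inv_mul]
    · rw [smul_inv_smul₀ hδ.ne']
      -- z = x + S
      have hVsplit : ∑ u ∈ VP + VF, lam u • u
          = (∑ v ∈ VP, fV v • v) + (∑ w ∈ VF, fW w • w) := by
        have e1 : ∑ u ∈ VP + VF, lam u • u
            = ∑ u ∈ VP + VF, (lam u • vd u + lam u • wd u) := by
          refine Finset.sum_congr rfl fun u hu => ?_
          rw [← smul_add, hvw u hu]
        rw [e1, Finset.sum_add_distrib]
        congr 1
        · rw [← Finset.sum_fiberwise_of_maps_to hvd (fun u => lam u • vd u)]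
          refine Finset.sum_congr rfl fun v _ => ?_
          rw [hfV_def]
          beta_reduce
          rw [Finset.sum_smul]
          refine Finset.sum_congr rfl fun u hu => ?_
          rw [(Finset.mem_filter.mp hu).2]
        · rw [← Finset.sum_fiberwise_of_maps_to hwd (fun u => lam u • wd u)]
          refine Finset.sum_congr rfl fun w _ => ?_
          rw [hfW_def]
          beta_reduce
          rw [Finset.sum_smul]
          refine Finset.sum_congr rfl fun u hu => ?_
          rw [(Finset.mem_filter.mp hu).2]
      have hCsplit : ∑ p ∈ CP ∪ VP, bet p • p
          = (∑ q ∈ CP, bet q • q) + ∑ v ∈ VP, (if v ∈ CP then 0 else bet v) • v := by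
        rw [split_union2 CP VP (fun p => bet p • p)]
        congr 1
        exact Finset.sum_congr rfl fun v _ => by split_ifs <;> simp
      have hRsplit : ∑ p ∈ RP ∪ VF ∪ CF ∪ RF, gam p • p
          = (∑ r ∈ RP, gam r • r) + (∑ w ∈ VF, gV w • w) + (∑ q ∈ CF, gC q • q)
            + (∑ r ∈ RF, gR r • r) := by
        rw [split_union2 (RP ∪ VF ∪ CF) RF (fun p => gam p • p),
          split_union2 (RP ∪ VF) CF (fun p => gam p • p),
          split_union2 RP VF (fun p => gam p • p)]
        have eV : ∑ w ∈ VF, (if w ∈ RP then 0 else gam w • w) = ∑ w ∈ VF, gV w • w := by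
          refine Finset.sum_congr rfl fun w _ => ?_
          rw [hgV_def]
          beta_reduce
          split_ifs <;> simp
        have eC : ∑ q ∈ CF, (if q ∈ RP ∪ VF then 0 else gam q • q)
            = ∑ q ∈ CF, gC q • q := by
          refine Finset.sum_congr rfl fun q _ => ?_
          rw [hgC_def]
          beta_reduce
          split_ifs <;> simp
        have eR : ∑ r ∈ RF, (if r ∈ RP ∪ VF ∪ CF then 0 else gam r • r)
            = ∑ r ∈ RF, gR r • r := by
          refine Finset.sum_congr rfl fun r _ => ?_
          rw [hgR_def]
          beta_reduce
          split_ifs <;> simp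
        rw [eV, eC, eR]
      have hxsplit : ∑ v ∈ VP, (fV v + if v ∈ CP then 0 else bet v) • v
          = (∑ v ∈ VP, fV v • v) + ∑ v ∈ VP, (if v ∈ CP then 0 else bet v) • v := by
        rw [← Finset.sum_add_distrib]
        exact Finset.sum_congr rfl fun v _ => add_smul _ _ _
      have hSsplit : ∑ w ∈ VF, (fW w + gV w) • w
          = (∑ w ∈ VF, fW w • w) + ∑ w ∈ VF, gV w • w := by
        rw [← Finset.sum_add_distrib]
        exact Finset.sum_congr rfl fun w _ => add_smul _ _ _
      rw [hzeq, hVsplit, hCsplit, hRsplit, hx_def, hS_def, hxsplit, hSsplit]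
      abel
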